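/- For all positive integers r and m and all n ≥ 1, there exists a polynomial G of degree at most m−1 with rational coefficients such that S_m^{(r)}(n) = S_1^{(r)}(n) · G(n + r/2), and moreover G can be chosen independent of n (one polynomial works for all n). -/
import Mathlib


/-- Hyper-sum of powers of integers: `S m 0 n = n^m` and
`S m (r+1) n = ∑ i in [1..n], S m r i`. -/
def S (m : ℕ) : ℕ → ℕ → ℚ
  | 0, n => (n : ℚ) ^ m
  | r + 1, n => ∑ i ∈ Finset.Icc 1 n, S m r i

open Polynomial Finset

lemma S_zero (m n : ℕ) : S m 0 n = (n : ℚ) ^ m := rfl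
lemma S_succ (m r n : ℕ) : S m (r+1) n = ∑ i ∈ Finset.Icc 1 n, S m r i := rfl

lemma S_one_right (m r : ℕ) : S m r 1 = 1 := by
  induction r with
  | zero => simp [S_zero]
  | succ r ih => simp [S_succ, ih]

lemma range_succ_eq_insert (n : ℕ) : Finset.range (n+1) = insert 0 (Finset.Icc 1 n) := by
  ext x; simp [Nat.lt_succ_iff]; omega

/-- sum of p-th powers over Icc 1 n is a polynomial of degree ≤ p+1 -/
lemma sum_pow_poly (p : ℕ) : ∃ Q : ℚ[X], Q.natDegree ≤ p + 1 ∧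
    ∀ n : ℕ, Q.eval (n : ℚ) = ∑ i ∈ Finset.Icc 1 n, (i : ℚ) ^ p := by
  match p with
  | 0 =>
    refine ⟨X, by simp, fun n => ?_⟩
    simp [Nat.card_Icc]
  | p + 1 =>
    refine ⟨(∑ i ∈ Finset.range (p + 2),
        C (_root_.bernoulli i * ((p + 2).choose i) / (p + 2)) * X ^ (p + 2 - i)).comp (X + 1),
      ?_, fun n => ?_⟩
    · rw [natDegree_comp]
      have h1 : (X + 1 : ℚ[X]).natDegree = 1 := by
        simpa using natDegree_X_add_C (1 : ℚ)
      rw [h1, mul_one]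
      apply natDegree_sum_le_of_forall_le
      intro i hi
      refine le_trans (natDegree_C_mul_le _ _) ?_
      simpa using Nat.sub_le (p+2) i
    · have key := sum_range_pow (n + 1) (p + 1)
      have h0 : ∑ k ∈ Finset.range (n + 1), (k : ℚ) ^ (p+1)
          = ∑ i ∈ Finset.Icc 1 n, (i : ℚ) ^ (p+1) := by
        rw [range_succ_eq_insert, Finset.sum_insert (by simp)]
        simp
      rw [h0] at key
      rw [eval_comp]
      simp only [eval_add, eval_X, eval_one, eval_finset_sum, eval_mul, eval_C, eval_pow]
      rw [key]
      refine Finset.sum_congr rfl fun i hi => ?_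
      push_cast
      ring

/-- summing any polynomial over Icc 1 n gives a polynomial of degree ≤ deg+1 -/
lemma sum_poly (P : ℚ[X]) : ∃ Q : ℚ[X], Q.natDegree ≤ P.natDegree + 1 ∧
    ∀ n : ℕ, Q.eval (n : ℚ) = ∑ i ∈ Finset.Icc 1 n, P.eval (i : ℚ) := by
  choose Qk hdeg heval using sum_pow_poly
  refine ⟨∑ k ∈ Finset.range (P.natDegree + 1), C (P.coeff k) * Qk k, ?_, fun n => ?_⟩
  · apply natDegree_sum_le_of_forall_le
    intro k hk
    refine le_trans (natDegree_C_mul_le _ _) (le_trans (hdeg k) ?_)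
    simp only [Finset.mem_range] at hk
    omega
  · simp only [eval_finset_sum, eval_mul, eval_C, heval]
    simp_rw [Finset.mul_sum]
    rw [Finset.sum_comm]
    refine Finset.sum_congr rfl fun i hi => ?_
    rw [eval_eq_sum_range]

lemma S_poly_roots (m : ℕ) (hm : 1 ≤ m) : ∀ r : ℕ, ∃ P : ℚ[X],
    P.natDegree ≤ m + r ∧ (∀ n : ℕ, P.eval (n : ℚ) = S m r n) ∧
    ∀ k : ℕ, k ≤ r → P.eval (-(k : ℚ)) = 0 := by
  intro r
  induction r with
  | zero =>
    refine ⟨X ^ m, by simp, fun n => by simp [S_zero], fun k hk => ?_⟩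
    interval_cases k
    simp [zero_pow (by omega : m ≠ 0)]
  | succ r ih =>
    obtain ⟨P, hPdeg, hPeval, hProots⟩ := ih
    obtain ⟨Q, hQdeg, hQeval⟩ := sum_poly P
    have heval : ∀ n : ℕ, Q.eval (n : ℚ) = S m (r+1) n := by
      intro n
      rw [hQeval, S_succ]
      exact Finset.sum_congr rfl fun i _ => hPeval i
    -- difference identity as a polynomial identity
    have hdiff : Q.comp (X + 1) - Q = P.comp (X + 1) := by
      apply eq_of_infinite_eval_eq
      apply Set.infinite_of_injective_forall_mem (f := fun n : ℕ => (n : ℚ))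
        Nat.cast_injective
      intro n
      simp only [Set.mem_setOf_eq, eval_sub, eval_comp, eval_add, eval_X, eval_one]
      have h1 : ((n : ℚ) + 1) = ((n + 1 : ℕ) : ℚ) := by push_cast; ring
      rw [h1, heval, heval, hPeval, S_succ, S_succ]
      rw [show Finset.Icc 1 (n+1) = insert (n+1) (Finset.Icc 1 n) by
        ext x; simp; omega]
      rw [Finset.sum_insert (by simp)]
      ring
    have hdiff' : ∀ x : ℚ, Q.eval (x + 1) - Q.eval x = P.eval (x + 1) := by
      intro x
      have := congrArg (eval x) hdiff
      simpa [eval_comp] using this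
    refine ⟨Q, le_trans hQdeg (by omega), heval, ?_⟩
    intro k hk
    induction k with
    | zero =>
      have := heval 0
      simpa [S_succ] using this
    | succ k ihk =>
      have h1 := hdiff' (-(k+1 : ℚ))
      have h2 : (-(k+1 : ℚ) + 1) = -(k : ℚ) := by ring
      rw [h2] at h1
      have h3 : Q.eval (-(k:ℚ)) = 0 := ihk (by omega)
      have h4 : P.eval (-(k:ℚ)) = 0 := hProots k (by omega)
      push_cast at h1 ⊢
      linarith

lemma prod_X_sub_C_dvd_of_roots (s : Finset ℚ) :
    ∀ P : ℚ[X], (∀ a ∈ s, P.eval a = 0) → (∏ a ∈ s, (X - C a)) ∣ P := by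
  induction s using Finset.induction with
  | empty => simp
  | @insert a s ha ih =>
    intro P hP
    have h1 : (X - C a) ∣ P := dvd_iff_isRoot.mpr (hP a (Finset.mem_insert_self a s))
    obtain ⟨Q, hQ⟩ := h1
    have h2 : ∀ b ∈ s, Q.eval b = 0 := by
      intro b hb
      have hba : b ≠ a := fun h => ha (h ▸ hb)
      have := hP b (Finset.mem_insert_of_mem hb)
      rw [hQ, eval_mul, eval_sub, eval_X, eval_C] at this
      rcases mul_eq_zero.mp this with h | h
      · exact absurd (by linarith [sub_eq_zero.mp h]) hba
      · exact h
    rw [Finset.prod_insert ha, hQ]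
    exact mul_dvd_mul_left _ (ih Q h2)

/-- The polynomial (X)(X+1)...(X+r). -/
noncomputable def B (r : ℕ) : ℚ[X] := ∏ k ∈ Finset.range (r+1), (X - C (-(k:ℚ)))

lemma B_monic (r : ℕ) : (B r).Monic :=
  monic_prod_of_monic _ _ fun k _ => monic_X_sub_C _

lemma B_natDegree (r : ℕ) : (B r).natDegree = r + 1 := by
  have h : ∀ i ∈ Finset.range (r+1), (X - C (-(i:ℚ))).natDegree = 1 :=
    fun i _ => natDegree_X_sub_C _
  rw [B, natDegree_prod _ _ fun k _ => X_sub_C_ne_zero _, Finset.sum_congr rfl h]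
  simp

lemma B_eval (r : ℕ) (x : ℚ) : (B r).eval x = ∏ k ∈ Finset.range (r+1), (x + k) := by
  simp [B, eval_prod, sub_neg_eq_add]

lemma B_eval_one_pos (r : ℕ) : 0 < (B r).eval 1 := by
  rw [B_eval]
  exact Finset.prod_pos fun k _ => by positivity

/-- key structure lemma -/
lemma key (m r : ℕ) (hm : 1 ≤ m) : ∃ Q : ℚ[X], Q.natDegree ≤ m - 1 ∧
    ∀ n : ℕ, S m r n = (B r).eval (n : ℚ) * Q.eval (n : ℚ) := by
  obtain ⟨P, hPdeg, hPeval, hProots⟩ := S_poly_roots m hm r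
  have hdvd : B r ∣ P := by
    have := prod_X_sub_C_dvd_of_roots
      ((Finset.range (r+1)).image (fun k : ℕ => -(k:ℚ))) P ?_
    · rwa [Finset.prod_image (by intro x hx y hy h; simpa using h)] at this
    · intro a ha
      simp only [Finset.mem_image, Finset.mem_range] at ha
      obtain ⟨k, hk, rfl⟩ := ha
      exact hProots k (by omega)
  obtain ⟨Q, hQ⟩ := hdvd
  have hPne : P ≠ 0 := by
    intro h
    have := hPeval 1
    rw [h, S_one_right] at this
    simp at this
  have hQne : Q ≠ 0 := by rintro rfl; simp at hQ; exact hPne hQ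
  have hdeg : P.natDegree = (r + 1) + Q.natDegree := by
    rw [hQ, natDegree_mul (B_monic r).ne_zero hQne, B_natDegree]
  refine ⟨Q, by omega, fun n => ?_⟩
  rw [← hPeval, hQ, eval_mul]

theorem stmt_8 (r m : ℕ) (hr : 1 ≤ r) (hm : 1 ≤ m) :
    ∃ G : Polynomial ℚ, G.natDegree ≤ m - 1 ∧
      ∀ n : ℕ, 1 ≤ n →
        S m r n = S 1 r n * G.eval ((n : ℚ) + r / 2) := by
  obtain ⟨Q1, hQ1deg, hQ1⟩ := key 1 r le_rfl
  obtain ⟨Q, hQdeg, hQ⟩ := key m r hm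
  have hQ1C : Q1 = C (Q1.coeff 0) := eq_C_of_natDegree_le_zero (by simpa using hQ1deg)
  set c := Q1.coeff 0 with hc
  have h1 : (1 : ℚ) = (B r).eval 1 * c := by
    have := hQ1 1
    rw [S_one_right, hQ1C] at this
    simpa using this
  have hB1 : (B r).eval 1 ≠ 0 := ne_of_gt (B_eval_one_pos r)
  have hcval : c = ((B r).eval 1)⁻¹ := by field_simp at h1 ⊢; linarith
  have hBn : ∀ n : ℕ, (B r).eval (n : ℚ) = S 1 r n * (B r).eval 1 := by
    intro n
    have := hQ1 n
    rw [hQ1C] at this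
    rw [this]
    simp [hcval]
    field_simp
  refine ⟨C ((B r).eval 1) * Q.comp (X - C ((r:ℚ)/2)), ?_, fun n hn => ?_⟩
  · refine le_trans (natDegree_C_mul_le _ _) ?_
    rw [natDegree_comp, natDegree_X_sub_C, mul_one]
    exact hQdeg
  · rw [hQ n, hBn n]
    simp only [eval_mul, eval_C, eval_comp, eval_sub, eval_X]
    ring_nf
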